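/- arXiv:0801.1999 — 2 statements merged into one kernel-verified Lean document; each statement's English description precedes it below -/
import Mathlib

section
/- For small $\lambda>0$ and $1<\xi<\lambda^{-1}$, the Green's function $G_0(\xi,\eta;\lambda)$ of $-\partial_\xi^2-\frac{1}{4\xi^2}$ satisfies $|G_0(\xi,\eta;\lambda)|\lesssim (\xi\eta)^{1/2}|\log\lambda|^2\,\chi_{[\xi<\eta<\lambda^{-1}]}+(\xi/\lambda)^{1/2}|\log\lambda|\,\chi_{[\eta>\lambda^{-1}]}$. -/
set_option maxHeartbeats 1000000

/-- Bound for the Green's function of `-∂_ξ² - 1/(4ξ²)` for small `λ > 0` and `1 < ξ < λ⁻¹`: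
`|G₀(ξ,η;λ)| ≲ (ξη)^{1/2}|log λ|² χ_{[ξ<η<λ⁻¹]} + (ξ/λ)^{1/2}|log λ| χ_{[η>λ⁻¹]}`. -/
theorem G0_low_energy_bound (C1 : ℝ) (H : ℝ → ℂ)
    (hH1 : ∀ x : ℝ, 0 < x → x ≤ 1 → ‖H x‖ ≤ C1 * (1 + |Real.log x|))
    (hH2 : ∀ x : ℝ, 1 < x → ‖H x‖ ≤ C1 * x ^ (-(1 : ℝ) / 2))
    (f0 : ℝ → ℝ → ℂ)
    (hf0 : ∀ lam ξ : ℝ, f0 lam ξ = (Real.sqrt (Real.pi / 2) : ℂ) *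
        Complex.exp (Complex.I * (Real.pi : ℂ) / 4) * (Real.sqrt (ξ * lam) : ℂ) * H (ξ * lam))
    (G0 : ℝ → ℝ → ℝ → ℂ)
    (hG0 : ∀ lam ξ η : ℝ, G0 lam ξ η =
      ((starRingEnd ℂ) (f0 lam ξ) * f0 lam η - f0 lam ξ * (starRingEnd ℂ) (f0 lam η))
        / (2 * Complex.I * (lam : ℂ))) :
    ∃ C > 0, ∃ lam0 > 0, ∀ lam : ℝ, 0 < lam → lam < lam0 →
      ∀ ξ : ℝ, 1 < ξ → ξ < lam⁻¹ → ∀ η : ℝ, ξ < η →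
        (η < lam⁻¹ → ‖G0 lam ξ η‖ ≤ C * Real.sqrt (ξ * η) * (Real.log lam) ^ 2) ∧
        (lam⁻¹ < η → ‖G0 lam ξ η‖ ≤ C * Real.sqrt (ξ / lam) * |Real.log lam|) := by
  have hC1 : 0 ≤ C1 := by
    have h := hH1 1 one_pos le_rfl
    have h2 : (0:ℝ) ≤ C1 * (1 + |Real.log 1|) := le_trans (norm_nonneg _) h
    simpa using h2
  refine ⟨2 * Real.pi * (C1 + 1) ^ 2 + 1, by positivity, Real.exp (-1), Real.exp_pos _, ?_⟩
  intro lam hlam hlam0 ξ hξ hξlam η hξη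
  have hπ : (0:ℝ) < Real.pi := Real.pi_pos
  have hξ0 : (0:ℝ) < ξ := lt_trans one_pos hξ
  have hη0 : (0:ℝ) < η := lt_trans hξ0 hξη
  have hlog : Real.log lam < -1 := by
    have h := Real.log_lt_log hlam hlam0
    rwa [Real.log_exp] at h
  set L : ℝ := |Real.log lam| with hLdef
  have hL : 1 ≤ L := by
    rw [hLdef, abs_of_neg (by linarith)]
    linarith
  have hL0 : 0 < L := lt_of_lt_of_le one_pos hL
  -- norm of f0
  have hnormexp : ‖Complex.exp (Complex.I * (Real.pi : ℂ) / 4)‖ = 1 := by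
    rw [show Complex.I * (Real.pi : ℂ) / 4 = ((Real.pi/4 : ℝ) : ℂ) * Complex.I by push_cast; ring]
    rw [Complex.norm_exp_ofReal_mul_I]
  set A : ℝ := Real.sqrt (Real.pi / 2) with hAdef
  have hA0 : 0 < A := Real.sqrt_pos.mpr (by positivity)
  have hA2 : A ^ 2 = Real.pi / 2 := Real.sq_sqrt (by positivity)
  have hf0n : ∀ t : ℝ, ‖f0 lam t‖ = A * (Real.sqrt (t * lam) * ‖H (t * lam)‖) := by
    intro t
    rw [hf0, norm_mul, norm_mul, norm_mul, hnormexp]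
    simp only [Complex.norm_real, Real.norm_eq_abs]
    rw [abs_of_nonneg (Real.sqrt_nonneg (Real.pi / 2)), abs_of_nonneg (Real.sqrt_nonneg _)]
    ring
  -- basic Green's function bound
  have hGle : ‖G0 lam ξ η‖ ≤ ‖f0 lam ξ‖ * ‖f0 lam η‖ / lam := by
    rw [hG0, norm_div]
    have hden : ‖2 * Complex.I * (lam : ℂ)‖ = 2 * lam := by
      simp [norm_mul, Complex.norm_real, Real.norm_eq_abs, abs_of_pos hlam]
    rw [hden]
    have hnum : ‖(starRingEnd ℂ) (f0 lam ξ) * f0 lam η - f0 lam ξ * (starRingEnd ℂ) (f0 lam η)‖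
        ≤ 2 * (‖f0 lam ξ‖ * ‖f0 lam η‖) := by
      calc ‖(starRingEnd ℂ) (f0 lam ξ) * f0 lam η - f0 lam ξ * (starRingEnd ℂ) (f0 lam η)‖
          ≤ ‖(starRingEnd ℂ) (f0 lam ξ) * f0 lam η‖ + ‖f0 lam ξ * (starRingEnd ℂ) (f0 lam η)‖ :=
            norm_sub_le _ _
        _ = 2 * (‖f0 lam ξ‖ * ‖f0 lam η‖) := by
            simp [norm_mul]; ring
    calc ‖(starRingEnd ℂ) (f0 lam ξ) * f0 lam η - f0 lam ξ * (starRingEnd ℂ) (f0 lam η)‖ / (2 * lam)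
        ≤ 2 * (‖f0 lam ξ‖ * ‖f0 lam η‖) / (2 * lam) := by gcongr
      _ = ‖f0 lam ξ‖ * ‖f0 lam η‖ / lam := by
          field_simp
  -- bound on the ξ factor
  have hξl : ξ * lam < 1 := by
    calc ξ * lam < lam⁻¹ * lam := by gcongr
      _ = 1 := inv_mul_cancel₀ (ne_of_gt hlam)
  have hHξ : ‖H (ξ * lam)‖ ≤ C1 * (1 + L) := by
    have h := hH1 (ξ * lam) (by positivity) hξl.le
    refine h.trans ?_
    gcongr
    have h1 : Real.log lam ≤ Real.log (ξ * lam) := Real.log_le_log hlam (by nlinarith)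
    have h2 : Real.log (ξ * lam) ≤ 0 := Real.log_nonpos (by positivity) hξl.le
    rw [hLdef, abs_of_nonpos h2, abs_of_neg (by linarith : Real.log lam < 0)]
    linarith
  have hfξ : ‖f0 lam ξ‖ ≤ A * Real.sqrt (ξ * lam) * (C1 * (1 + L)) := by
    rw [hf0n ξ]
    calc A * (Real.sqrt (ξ * lam) * ‖H (ξ * lam)‖)
        ≤ A * (Real.sqrt (ξ * lam) * (C1 * (1 + L))) := by gcongr
      _ = A * Real.sqrt (ξ * lam) * (C1 * (1 + L)) := by ring
  constructor
  · -- case ξ < η < λ⁻¹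
    intro hη
    have hηl : η * lam < 1 := by
      calc η * lam < lam⁻¹ * lam := by gcongr
        _ = 1 := inv_mul_cancel₀ (ne_of_gt hlam)
    have hHη : ‖H (η * lam)‖ ≤ C1 * (1 + L) := by
      have h := hH1 (η * lam) (by positivity) hηl.le
      refine h.trans ?_
      gcongr
      have h1 : Real.log lam ≤ Real.log (η * lam) := Real.log_le_log hlam (by nlinarith)
      have h2 : Real.log (η * lam) ≤ 0 := Real.log_nonpos (by positivity) hηl.le
      rw [hLdef, abs_of_nonpos h2, abs_of_neg (by linarith : Real.log lam < 0)]
      linarith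
    have hfη : ‖f0 lam η‖ ≤ A * Real.sqrt (η * lam) * (C1 * (1 + L)) := by
      rw [hf0n η]
      calc A * (Real.sqrt (η * lam) * ‖H (η * lam)‖)
          ≤ A * (Real.sqrt (η * lam) * (C1 * (1 + L))) := by gcongr
        _ = A * Real.sqrt (η * lam) * (C1 * (1 + L)) := by ring
    have hsq : Real.sqrt (ξ * lam) * Real.sqrt (η * lam) = Real.sqrt (ξ * η) * lam := by
      rw [← Real.sqrt_mul (by positivity : (0:ℝ) ≤ ξ * lam),
        show ξ * lam * (η * lam) = ξ * η * lam ^ 2 by ring,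
        Real.sqrt_mul (by positivity), Real.sqrt_sq hlam.le]
    have key : ‖G0 lam ξ η‖ ≤ Real.pi / 2 * Real.sqrt (ξ * η) * (C1 * (1 + L)) ^ 2 := by
      calc ‖G0 lam ξ η‖ ≤ ‖f0 lam ξ‖ * ‖f0 lam η‖ / lam := hGle
        _ ≤ (A * Real.sqrt (ξ * lam) * (C1 * (1 + L))) *
              (A * Real.sqrt (η * lam) * (C1 * (1 + L))) / lam := by gcongr
        _ = A ^ 2 * (Real.sqrt (ξ * lam) * Real.sqrt (η * lam)) * (C1 * (1 + L)) ^ 2 / lam := by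
            ring
        _ = Real.pi / 2 * Real.sqrt (ξ * η) * (C1 * (1 + L)) ^ 2 * lam / lam := by
            rw [hA2, hsq]; ring
        _ = Real.pi / 2 * Real.sqrt (ξ * η) * (C1 * (1 + L)) ^ 2 := by
            rw [mul_div_assoc, div_self (ne_of_gt hlam), mul_one]
    refine key.trans ?_
    have hK2 : C1 * (1 + L) ≤ (C1 + 1) * (2 * L) := by nlinarith
    have hK : (C1 * (1 + L)) ^ 2 ≤ ((C1 + 1) * (2 * L)) ^ 2 :=
      pow_le_pow_left₀ (by positivity) hK2 2
    have hLL : (Real.log lam) ^ 2 = L ^ 2 := (sq_abs _).symm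
    rw [hLL]
    calc Real.pi / 2 * Real.sqrt (ξ * η) * (C1 * (1 + L)) ^ 2
        ≤ Real.pi / 2 * Real.sqrt (ξ * η) * ((C1 + 1) * (2 * L)) ^ 2 := by gcongr
      _ = 2 * Real.pi * (C1 + 1) ^ 2 * Real.sqrt (ξ * η) * L ^ 2 := by ring
      _ ≤ (2 * Real.pi * (C1 + 1) ^ 2 + 1) * Real.sqrt (ξ * η) * L ^ 2 := by gcongr; linarith
  · -- case η > λ⁻¹
    intro hη
    have hηl : 1 < η * lam := by
      calc (1:ℝ) = lam⁻¹ * lam := (inv_mul_cancel₀ (ne_of_gt hlam)).symm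
        _ < η * lam := by gcongr
    have hηlam0 : 0 < η * lam := lt_trans one_pos hηl
    have hHη : ‖H (η * lam)‖ ≤ C1 * (η * lam) ^ (-(1:ℝ)/2) := hH2 _ hηl
    have hfη : ‖f0 lam η‖ ≤ A * C1 := by
      rw [hf0n η]
      calc A * (Real.sqrt (η * lam) * ‖H (η * lam)‖)
          ≤ A * (Real.sqrt (η * lam) * (C1 * (η * lam) ^ (-(1:ℝ)/2))) := by gcongr
        _ = A * C1 * (Real.sqrt (η * lam) * (η * lam) ^ (-(1:ℝ)/2)) := by ring
        _ = A * C1 := by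
            rw [Real.sqrt_eq_rpow, ← Real.rpow_add hηlam0]
            norm_num
    have hsq2 : Real.sqrt (ξ * lam) / lam = Real.sqrt (ξ / lam) := by
      rw [show ξ / lam = (ξ * lam) / lam ^ 2 by field_simp,
        Real.sqrt_div (by positivity), Real.sqrt_sq hlam.le]
    have key : ‖G0 lam ξ η‖ ≤ Real.pi / 2 * C1 ^ 2 * (1 + L) * Real.sqrt (ξ / lam) := by
      calc ‖G0 lam ξ η‖ ≤ ‖f0 lam ξ‖ * ‖f0 lam η‖ / lam := hGle
        _ ≤ (A * Real.sqrt (ξ * lam) * (C1 * (1 + L))) * (A * C1) / lam := by gcongr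
        _ = A ^ 2 * C1 ^ 2 * (1 + L) * (Real.sqrt (ξ * lam) / lam) := by ring
        _ = Real.pi / 2 * C1 ^ 2 * (1 + L) * Real.sqrt (ξ / lam) := by rw [hA2, hsq2]
    refine key.trans ?_
    have h1L : 1 + L ≤ 2 * L := by linarith
    calc Real.pi / 2 * C1 ^ 2 * (1 + L) * Real.sqrt (ξ / lam)
        ≤ Real.pi / 2 * C1 ^ 2 * (2 * L) * Real.sqrt (ξ / lam) := by gcongr
      _ = Real.pi * C1 ^ 2 * Real.sqrt (ξ / lam) * L := by ring
      _ ≤ (2 * Real.pi * (C1 + 1) ^ 2 + 1) * Real.sqrt (ξ / lam) * L := by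
          have hsq' : C1 ^ 2 ≤ (C1 + 1) ^ 2 := by nlinarith
          have hp1 : Real.pi * C1 ^ 2 ≤ Real.pi * (C1 + 1) ^ 2 :=
            mul_le_mul_of_nonneg_left hsq' hπ.le
          have hp2 : 0 ≤ Real.pi * (C1 + 1) ^ 2 := mul_nonneg hπ.le (sq_nonneg _)
          have hc : Real.pi * C1 ^ 2 ≤ 2 * Real.pi * (C1 + 1) ^ 2 + 1 := by linarith
          exact mul_le_mul_of_nonneg_right
            (mul_le_mul_of_nonneg_right hc (Real.sqrt_nonneg _)) hL0.le
end

section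
/- Let $V(\xi)=-\frac{1}{4\xi^2}+V_1(\xi)$ on $\xi>0$ with $|V_1(\xi)|\lesssim\xi^{-3}$, and let $m(x)=\sqrt{x}|\log x|$ for $0<x<1$ and $m(x)=1$ for $x\ge1$. If $f_+(\cdot,\lambda)$ solves the perturbed Volterra equation $f_+(\xi,\lambda)=f_0(\xi,\lambda)+\int_\xi^\infty G_0(\xi,\eta;\lambda)V_1(\eta)f_+(\eta,\lambda)\,d\eta$ with $|f_0(\xi,\lambda)|\lesssim m(\xi\lambda)$ and $|G_0(\xi,\eta;\lambda)|\lesssim\lambda^{-1}m(\xi\lambda)m(\eta\lambda)$, then for small $\lambda>0$ and $|\log\lambda|^2\le\xi\ll\lambda^{-1}$ one has $|f_+(\xi,\lambda)|\lesssim m(\xi\lambda)$ and $|f_+(\xi,\lambda)-f_0(\xi,\lambda)|\lesssim \xi^{-1/2}\lambda^{1/2-\varepsilon}$ for any fixed $\varepsilon>0$. -/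
open MeasureTheory

/-- The weight `m(x) = √x |log x|` for `0 < x < 1` and `m(x) = 1` for `x ≥ 1`. -/
noncomputable def mwt (x : ℝ) : ℝ := if x < 1 then Real.sqrt x * |Real.log x| else 1

lemma mwt_nonneg (x : ℝ) : 0 ≤ mwt x := by
  unfold mwt; split_ifs with h
  · positivity
  · norm_num

lemma mwt_pos {x : ℝ} (hx : 0 < x) : 0 < mwt x := by
  unfold mwt; split_ifs with h
  · apply mul_pos (Real.sqrt_pos.2 hx)
    rw [abs_pos]
    exact ne_of_lt (Real.log_neg hx h)
  · norm_num

lemma mwt_le_sqrt {x c : ℝ} (hx : 0 < x) (hx1 : x ≤ 1) (hc1 : 1 ≤ c)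
    (hlog : |Real.log x| ≤ c) : mwt x ≤ Real.sqrt x * c := by
  unfold mwt; split_ifs with h
  · exact mul_le_mul_of_nonneg_left hlog (Real.sqrt_nonneg _)
  · have hx1' : x = 1 := le_antisymm hx1 (not_lt.1 h)
    rw [hx1', Real.sqrt_one]; linarith

lemma key_k {lam η : ℝ} (hlam : 0 < lam) (hlam' : lam ≤ Real.exp (-1)) (hη : 1 ≤ η) :
    lam⁻¹ * η ^ (-(3:ℝ)) * (mwt (η * lam))^2 ≤ (Real.log lam)^2 * η ^ (-(2:ℝ)) := by
  have hη0 : (0:ℝ) < η := by linarith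
  have hx0 : 0 < η * lam := mul_pos hη0 hlam
  have hloglam : Real.log lam ≤ -1 := by
    have := Real.log_le_log hlam hlam'
    rwa [Real.log_exp] at this
  have hL1 : 1 ≤ (Real.log lam)^2 := by nlinarith
  have hrpow3 : η ^ (-(3:ℝ)) = η ^ (-(2:ℝ)) * η⁻¹ := by
    rw [← Real.rpow_neg_one η, ← Real.rpow_add hη0]; norm_num
  have h2 : (0:ℝ) ≤ η ^ (-(2:ℝ)) := Real.rpow_nonneg hη0.le _
  by_cases hcase : η * lam < 1
  · have hm : (mwt (η*lam))^2 = (η*lam) * (Real.log (η*lam))^2 := by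
      unfold mwt
      rw [if_pos hcase, mul_pow, sq_abs, Real.sq_sqrt hx0.le]
    have hlog_le : Real.log lam ≤ Real.log (η*lam) := by
      apply Real.log_le_log hlam; nlinarith
    have hlog_np : Real.log (η*lam) ≤ 0 := Real.log_nonpos hx0.le hcase.le
    have hsq : (Real.log (η*lam))^2 ≤ (Real.log lam)^2 := by nlinarith
    have hcalc : lam⁻¹ * η ^ (-(3:ℝ)) * ((η*lam) * (Real.log (η*lam))^2)
        = (Real.log (η*lam))^2 * η ^ (-(2:ℝ)) := by
      rw [hrpow3]; field_simp
    rw [hm, hcalc]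
    exact mul_le_mul_of_nonneg_right hsq h2
  · have hm : mwt (η*lam) = 1 := by unfold mwt; rw [if_neg hcase]
    have hge : 1 ≤ η * lam := not_lt.1 hcase
    have hinv : lam⁻¹ ≤ η := by rw [inv_eq_one_div, div_le_iff₀ hlam]; linarith
    have step1 : lam⁻¹ * η ^ (-(3:ℝ)) ≤ η * η ^ (-(3:ℝ)) :=
      mul_le_mul_of_nonneg_right hinv (Real.rpow_nonneg hη0.le _)
    have step2 : η * η ^ (-(3:ℝ)) = η ^ (-(2:ℝ)) := by
      rw [hrpow3]; field_simp
    rw [hm, one_pow, mul_one]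
    calc lam⁻¹ * η ^ (-(3:ℝ)) ≤ η ^ (-(2:ℝ)) := by rw [← step2]; exact step1
      _ ≤ (Real.log lam)^2 * η ^ (-(2:ℝ)) := by nlinarith

noncomputable def bootC (C0 : ℝ) : ℕ → ℝ :=
  fun j => Nat.rec (4/3*(C0+1)) (fun n c => 4/3*(C0 + ((n:ℝ)+1)/4 * c)) j

lemma bootC_zero (C0 : ℝ) : bootC C0 0 = 4/3*(C0+1) := rfl
lemma bootC_succ (C0 : ℝ) (j : ℕ) : bootC C0 (j+1) = 4/3*(C0 + ((j:ℝ)+1)/4 * bootC C0 j) := rfl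

lemma bootC_nonneg {C0 : ℝ} (h : 0 ≤ C0) : ∀ j, 0 ≤ bootC C0 j := by
  intro j; induction j with
  | zero => rw [bootC_zero]; linarith
  | succ n ih =>
    rw [bootC_succ]
    have h2 : 0 ≤ ((n:ℝ)+1)/4 * bootC C0 n := mul_nonneg (by positivity) ih
    linarith

lemma inv_anti {a b : ℝ} (ha : 0 < a) (hab : a ≤ b) : b⁻¹ ≤ a⁻¹ := by
  rw [← one_div, ← one_div]; exact one_div_le_one_div_of_le ha hab


lemma piece_bound (C0 : ℝ) (hC0 : 0 < C0) (V1 : ℝ → ℝ) (fplus : ℝ → ℝ → ℂ)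
    (G0 : ℝ → ℝ → ℝ → ℂ)
    (hV1 : ∀ ξ : ℝ, 1 ≤ ξ → |V1 ξ| ≤ C0 * ξ ^ (-(3 : ℝ)))
    (hG0 : ∀ lam : ℝ, 0 < lam → ∀ ξ η : ℝ, 0 < ξ → ξ < η →
      ‖G0 lam ξ η‖ ≤ C0 * lam⁻¹ * mwt (ξ * lam) * mwt (η * lam))
    (lam : ℝ) (hlam : 0 < lam) (hlam' : lam ≤ Real.exp (-1))
    (ξ : ℝ) (hξ : 1 ≤ ξ) (s : Set ℝ) (hs : MeasurableSet s) (hsub : s ⊆ Set.Ioi ξ)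
    (c' : ℝ) (hc' : 0 ≤ c') (hub : ∀ η ∈ s, ‖fplus lam η‖ ≤ c' * mwt (η * lam)) :
    ‖∫ η in s, G0 lam ξ η * (V1 η : ℂ) * fplus lam η‖ ≤
      (C0^2 * c' * mwt (ξ * lam) * (Real.log lam)^2) * ∫ η in s, η ^ (-(2:ℝ)) := by
  have hξ0 : (0:ℝ) < ξ := by linarith
  set D := C0^2 * c' * mwt (ξ * lam) * (Real.log lam)^2 with hD
  have hD0 : 0 ≤ D :=
    mul_nonneg (mul_nonneg (mul_nonneg (by positivity) hc') (mwt_nonneg _)) (sq_nonneg _)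
  have hg : IntegrableOn (fun η : ℝ => D * η ^ (-(2:ℝ))) s volume :=
    ((integrableOn_Ioi_rpow_of_lt (by norm_num) hξ0).mono_set hsub).const_mul D
  have hbound : ∀ η ∈ s, ‖G0 lam ξ η * (V1 η : ℂ) * fplus lam η‖ ≤ D * η ^ (-(2:ℝ)) := by
    intro η hη
    have hηξ : ξ < η := hsub hη
    have hη1 : 1 ≤ η := le_trans hξ hηξ.le
    have hη0 : (0:ℝ) < η := by linarith
    have h1 := hG0 lam hlam ξ η hξ0 hηξ
    have h2 := hV1 η hη1
    have h3 := hub η hη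
    have hmξ := mwt_nonneg (ξ*lam); have hmη := mwt_nonneg (η*lam)
    have e1 : ‖G0 lam ξ η * (V1 η : ℂ) * fplus lam η‖
        = ‖G0 lam ξ η‖ * |V1 η| * ‖fplus lam η‖ := by
      rw [norm_mul, norm_mul, Complex.norm_real, Real.norm_eq_abs]
    have hmid : (0:ℝ) ≤ C0 * lam⁻¹ * mwt (ξ*lam) * mwt (η*lam) :=
      mul_nonneg (mul_nonneg (mul_nonneg hC0.le (inv_nonneg.2 hlam.le)) hmξ) hmη
    have step1 : ‖G0 lam ξ η‖ * |V1 η| * ‖fplus lam η‖ ≤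
        (C0 * lam⁻¹ * mwt (ξ*lam) * mwt (η*lam)) * (C0 * η ^ (-(3:ℝ))) * (c' * mwt (η*lam)) := by
      apply mul_le_mul _ h3 (norm_nonneg _) (mul_nonneg hmid (mul_nonneg hC0.le (Real.rpow_nonneg hη0.le _)))
      exact mul_le_mul h1 h2 (abs_nonneg _) hmid
    have e2 : (C0 * lam⁻¹ * mwt (ξ*lam) * mwt (η*lam)) * (C0 * η ^ (-(3:ℝ))) * (c' * mwt (η*lam))
        = (C0^2 * c' * mwt (ξ*lam)) * (lam⁻¹ * η ^ (-(3:ℝ)) * (mwt (η*lam))^2) := by ring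
    have step2 : (C0^2 * c' * mwt (ξ*lam)) * (lam⁻¹ * η ^ (-(3:ℝ)) * (mwt (η*lam))^2)
        ≤ (C0^2 * c' * mwt (ξ*lam)) * ((Real.log lam)^2 * η ^ (-(2:ℝ))) :=
      mul_le_mul_of_nonneg_left (key_k hlam hlam' hη1)
        (mul_nonneg (mul_nonneg (by positivity) hc') (mwt_nonneg _))
    rw [e1]
    calc ‖G0 lam ξ η‖ * |V1 η| * ‖fplus lam η‖
        ≤ (C0^2 * c' * mwt (ξ*lam)) * (lam⁻¹ * η ^ (-(3:ℝ)) * (mwt (η*lam))^2) := by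
          rw [← e2]; exact step1
      _ ≤ (C0^2 * c' * mwt (ξ*lam)) * ((Real.log lam)^2 * η ^ (-(2:ℝ))) := step2
      _ = D * η ^ (-(2:ℝ)) := by rw [hD]; ring
  calc ‖∫ η in s, G0 lam ξ η * (V1 η : ℂ) * fplus lam η‖
      ≤ ∫ η in s, D * η ^ (-(2:ℝ)) := by
        apply norm_integral_le_of_norm_le hg
        exact (ae_restrict_iff' hs).2 (Filter.Eventually.of_forall hbound)
    _ = D * ∫ η in s, η ^ (-(2:ℝ)) := integral_const_mul D _

lemma step_lemma (C0 : ℝ) (hC0 : 0 < C0) (V1 : ℝ → ℝ) (f0 fplus : ℝ → ℝ → ℂ)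
    (G0 : ℝ → ℝ → ℝ → ℂ)
    (hV1 : ∀ ξ : ℝ, 1 ≤ ξ → |V1 ξ| ≤ C0 * ξ ^ (-(3 : ℝ)))
    (hf0 : ∀ lam : ℝ, 0 < lam → ∀ ξ : ℝ, 0 < ξ → ‖f0 lam ξ‖ ≤ C0 * mwt (ξ * lam))
    (hG0 : ∀ lam : ℝ, 0 < lam → ∀ ξ η : ℝ, 0 < ξ → ξ < η →
      ‖G0 lam ξ η‖ ≤ C0 * lam⁻¹ * mwt (ξ * lam) * mwt (η * lam))
    (hint : ∀ lam : ℝ, 0 < lam → ∀ ξ : ℝ, 0 < ξ →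
      IntegrableOn (fun η => G0 lam ξ η * (V1 η : ℂ) * fplus lam η) (Set.Ioi ξ))
    (heq : ∀ lam : ℝ, 0 < lam → ∀ ξ : ℝ, 0 < ξ →
      fplus lam ξ = f0 lam ξ + ∫ η in Set.Ioi ξ, G0 lam ξ η * (V1 η : ℂ) * fplus lam η)
    (lam : ℝ) (hlam : 0 < lam) (hlam' : lam ≤ Real.exp (-1))
    (M : ℝ) (hM : ∀ ξ : ℝ, 0 < ξ → ‖fplus lam ξ‖ ≤ M * mwt (ξ * lam))
    (a b c' κ : ℝ) (ha : 1 ≤ a) (hab : a ≤ b) (hc' : 0 ≤ c') (hκ : 0 ≤ κ)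
    (hwin : C0^2 * (Real.log lam)^2 * (a⁻¹ - b⁻¹) ≤ 1/4)
    (htail : C0^2 * (Real.log lam)^2 * b⁻¹ ≤ κ)
    (hb : ∀ ξ : ℝ, b ≤ ξ → ‖fplus lam ξ‖ ≤ c' * mwt (ξ * lam)) :
    ∀ ξ : ℝ, a ≤ ξ → ‖fplus lam ξ‖ ≤ 4/3 * (C0 + κ * c') * mwt (ξ * lam) := by
  have ha0 : (0:ℝ) < a := lt_of_lt_of_le one_pos ha
  have hb0 : (0:ℝ) < b := lt_of_lt_of_le ha0 hab
  set T : Set ℝ := {t | ∃ ξ : ℝ, a ≤ ξ ∧ t = ‖fplus lam ξ‖ / mwt (ξ * lam)} with hT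
  have hTne : T.Nonempty := ⟨_, a, le_rfl, rfl⟩
  have hTbdd : BddAbove T := by
    refine ⟨M, ?_⟩; rintro t ⟨ξ, hξ, rfl⟩
    have hm := mwt_pos (mul_pos (lt_of_lt_of_le ha0 hξ) hlam)
    rw [div_le_iff₀ hm]
    exact hM ξ (lt_of_lt_of_le ha0 hξ)
  set S := sSup T with hS
  have hSle : ∀ ξ : ℝ, a ≤ ξ → ‖fplus lam ξ‖ ≤ S * mwt (ξ * lam) := by
    intro ξ hξ
    have hm := mwt_pos (mul_pos (lt_of_lt_of_le ha0 hξ) hlam)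
    have h := le_csSup hTbdd (⟨ξ, hξ, rfl⟩ : (‖fplus lam ξ‖ / mwt (ξ * lam)) ∈ T)
    exact (div_le_iff₀ hm).mp h
  have hS0 : 0 ≤ S := by
    have hm := mwt_pos (mul_pos ha0 hlam)
    have h := le_csSup hTbdd (⟨a, le_rfl, rfl⟩ : (‖fplus lam a‖ / mwt (a * lam)) ∈ T)
    have h0 : 0 ≤ ‖fplus lam a‖ / mwt (a*lam) := div_nonneg (norm_nonneg _) hm.le
    linarith
  have hCL : (0:ℝ) ≤ C0^2 * (Real.log lam)^2 := by positivity
  have hE : ∀ ξ : ℝ, a ≤ ξ → ‖fplus lam ξ‖ ≤ (C0 + S/4 + κ * c') * mwt (ξ * lam) := by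
    intro ξ hξa
    have hξ0 : (0:ℝ) < ξ := lt_of_lt_of_le ha0 hξa
    have hξ1 : 1 ≤ ξ := le_trans ha hξa
    set b' := max ξ b with hb'
    have hξb' : ξ ≤ b' := le_max_left _ _
    have hbb' : b ≤ b' := le_max_right _ _
    have hb'0 : (0:ℝ) < b' := lt_of_lt_of_le hξ0 hξb'
    have hmξ : 0 ≤ mwt (ξ*lam) := mwt_nonneg _
    have hsplit : (∫ η in Set.Ioi ξ, G0 lam ξ η * (V1 η : ℂ) * fplus lam η)
        = (∫ η in Set.Ioc ξ b', G0 lam ξ η * (V1 η : ℂ) * fplus lam η)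
        + (∫ η in Set.Ioi b', G0 lam ξ η * (V1 η : ℂ) * fplus lam η) := by
      rw [← setIntegral_union Set.Ioc_disjoint_Ioi_same measurableSet_Ioi
          ((hint lam hlam ξ hξ0).mono_set Set.Ioc_subset_Ioi_self)
          ((hint lam hlam ξ hξ0).mono_set (Set.Ioi_subset_Ioi hξb')),
          Set.Ioc_union_Ioi_eq_Ioi hξb']
    have hIoc : (∫ η in Set.Ioc ξ b', η ^ (-(2:ℝ))) = ξ⁻¹ - b'⁻¹ := by
      rw [← intervalIntegral.integral_of_le hξb',
        integral_rpow (Or.inr ⟨by norm_num, Set.notMem_uIcc_of_lt hξ0 hb'0⟩)]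
      rw [show (-(2:ℝ))+1 = -1 by norm_num, Real.rpow_neg_one, Real.rpow_neg_one]
      ring
    have hIoi2 : (∫ η in Set.Ioi b', η ^ (-(2:ℝ))) = b'⁻¹ := by
      rw [integral_Ioi_rpow_of_lt (by norm_num) hb'0]
      rw [show (-(2:ℝ))+1 = -1 by norm_num, Real.rpow_neg_one]
      ring
    have hI1 : ‖∫ η in Set.Ioc ξ b', G0 lam ξ η * (V1 η : ℂ) * fplus lam η‖ ≤
        (C0^2 * S * mwt (ξ * lam) * (Real.log lam)^2) * (ξ⁻¹ - b'⁻¹) := by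
      have h := piece_bound C0 hC0 V1 fplus G0 hV1 hG0 lam hlam hlam' ξ hξ1
        (Set.Ioc ξ b') measurableSet_Ioc Set.Ioc_subset_Ioi_self S hS0
        (fun η hη => hSle η (hξa.trans hη.1.le))
      rwa [hIoc] at h
    have hI2 : ‖∫ η in Set.Ioi b', G0 lam ξ η * (V1 η : ℂ) * fplus lam η‖ ≤
        (C0^2 * c' * mwt (ξ * lam) * (Real.log lam)^2) * b'⁻¹ := by
      have h := piece_bound C0 hC0 V1 fplus G0 hV1 hG0 lam hlam hlam' ξ hξ1
        (Set.Ioi b') measurableSet_Ioi (Set.Ioi_subset_Ioi hξb') c' hc'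
        (fun η hη => hb η (hbb'.trans (le_of_lt hη)))
      rwa [hIoi2] at h
    have hwin' : C0^2 * (Real.log lam)^2 * (ξ⁻¹ - b'⁻¹) ≤ 1/4 := by
      have hd : ξ⁻¹ - b'⁻¹ ≤ a⁻¹ - b⁻¹ := by
        rcases le_total ξ b with h | h
        · rw [hb', max_eq_right h]
          have h1 : ξ⁻¹ ≤ a⁻¹ := one_div a ▸ one_div ξ ▸ one_div_le_one_div_of_le ha0 hξa
          linarith
        · rw [hb', max_eq_left h]
          have h1 : b⁻¹ ≤ a⁻¹ := one_div a ▸ one_div b ▸ one_div_le_one_div_of_le ha0 hab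
          linarith
      calc C0^2 * (Real.log lam)^2 * (ξ⁻¹ - b'⁻¹)
          ≤ C0^2 * (Real.log lam)^2 * (a⁻¹ - b⁻¹) := mul_le_mul_of_nonneg_left hd hCL
        _ ≤ 1/4 := hwin
    have htail' : C0^2 * (Real.log lam)^2 * b'⁻¹ ≤ κ := by
      have h1 : b'⁻¹ ≤ b⁻¹ := one_div b ▸ one_div b' ▸ one_div_le_one_div_of_le hb0 hbb'
      calc C0^2 * (Real.log lam)^2 * b'⁻¹
          ≤ C0^2 * (Real.log lam)^2 * b⁻¹ := mul_le_mul_of_nonneg_left h1 hCL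
        _ ≤ κ := htail
    have e1 : (C0^2 * S * mwt (ξ*lam) * (Real.log lam)^2) * (ξ⁻¹ - b'⁻¹)
        ≤ S * mwt (ξ*lam) * (1/4) := by
      have h := mul_le_mul_of_nonneg_left hwin' (mul_nonneg hS0 hmξ)
      calc (C0^2 * S * mwt (ξ*lam) * (Real.log lam)^2) * (ξ⁻¹ - b'⁻¹)
          = S * mwt (ξ*lam) * (C0^2 * (Real.log lam)^2 * (ξ⁻¹ - b'⁻¹)) := by ring
        _ ≤ S * mwt (ξ*lam) * (1/4) := h
    have e2 : (C0^2 * c' * mwt (ξ*lam) * (Real.log lam)^2) * b'⁻¹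
        ≤ c' * mwt (ξ*lam) * κ := by
      have h := mul_le_mul_of_nonneg_left htail' (mul_nonneg hc' hmξ)
      calc (C0^2 * c' * mwt (ξ*lam) * (Real.log lam)^2) * b'⁻¹
          = c' * mwt (ξ*lam) * (C0^2 * (Real.log lam)^2 * b'⁻¹) := by ring
        _ ≤ c' * mwt (ξ*lam) * κ := h
    have hf0' := hf0 lam hlam ξ hξ0
    calc ‖fplus lam ξ‖
        = ‖f0 lam ξ + ∫ η in Set.Ioi ξ, G0 lam ξ η * (V1 η : ℂ) * fplus lam η‖ := by
          rw [← heq lam hlam ξ hξ0]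
      _ ≤ ‖f0 lam ξ‖ + ‖∫ η in Set.Ioi ξ, G0 lam ξ η * (V1 η : ℂ) * fplus lam η‖ :=
          norm_add_le _ _
      _ ≤ ‖f0 lam ξ‖ + (‖∫ η in Set.Ioc ξ b', G0 lam ξ η * (V1 η : ℂ) * fplus lam η‖
            + ‖∫ η in Set.Ioi b', G0 lam ξ η * (V1 η : ℂ) * fplus lam η‖) := by
          rw [hsplit]; exact add_le_add le_rfl (norm_add_le _ _)
      _ ≤ C0 * mwt (ξ*lam) + (S * mwt (ξ*lam) * (1/4) + c' * mwt (ξ*lam) * κ) := by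
          exact add_le_add hf0' (add_le_add (le_trans hI1 e1) (le_trans hI2 e2))
      _ = (C0 + S/4 + κ * c') * mwt (ξ * lam) := by ring
  have hScs : S ≤ C0 + S/4 + κ * c' := by
    apply csSup_le hTne
    rintro t ⟨ξ, hξ, rfl⟩
    have hm := mwt_pos (mul_pos (lt_of_lt_of_le ha0 hξ) hlam)
    rw [div_le_iff₀ hm]
    exact hE ξ hξ
  have hS43 : S ≤ 4/3 * (C0 + κ * c') := by linarith
  intro ξ hξ
  exact (hSle ξ hξ).trans (mul_le_mul_of_nonneg_right hS43 (mwt_nonneg _))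

/-- Low-energy bounds for the perturbed Jost solution: if
`f₊(ξ,λ) = f₀(ξ,λ) + ∫_ξ^∞ G₀(ξ,η;λ) V₁(η) f₊(η,λ) dη` with `|V₁(ξ)| ≲ ξ⁻³`,
`|f₀| ≲ m(ξλ)` and `|G₀| ≲ λ⁻¹ m(ξλ) m(ηλ)`, then for small `λ > 0` and
`|log λ|² ≤ ξ ≤ λ⁻¹` one has `|f₊(ξ,λ)| ≲ m(ξλ)` and
`|f₊(ξ,λ) - f₀(ξ,λ)| ≲ ξ^{-1/2} λ^{1/2-ε}` for any fixed `ε > 0`. -/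
theorem low_energy_jost_bound (C0 : ℝ) (hC0 : 0 < C0)
    (V1 : ℝ → ℝ) (f0 fplus : ℝ → ℝ → ℂ) (G0 : ℝ → ℝ → ℝ → ℂ)
    (hV1 : ∀ ξ : ℝ, 1 ≤ ξ → |V1 ξ| ≤ C0 * ξ ^ (-(3 : ℝ)))
    (hf0 : ∀ lam : ℝ, 0 < lam → ∀ ξ : ℝ, 0 < ξ → ‖f0 lam ξ‖ ≤ C0 * mwt (ξ * lam))
    (hG0 : ∀ lam : ℝ, 0 < lam → ∀ ξ η : ℝ, 0 < ξ → ξ < η →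
      ‖G0 lam ξ η‖ ≤ C0 * lam⁻¹ * mwt (ξ * lam) * mwt (η * lam))
    (hint : ∀ lam : ℝ, 0 < lam → ∀ ξ : ℝ, 0 < ξ →
      IntegrableOn (fun η => G0 lam ξ η * (V1 η : ℂ) * fplus lam η) (Set.Ioi ξ))
    (heq : ∀ lam : ℝ, 0 < lam → ∀ ξ : ℝ, 0 < ξ →
      fplus lam ξ = f0 lam ξ + ∫ η in Set.Ioi ξ, G0 lam ξ η * (V1 η : ℂ) * fplus lam η)
    (hbd : ∀ lam : ℝ, 0 < lam → ∃ M, ∀ ξ : ℝ, 0 < ξ → ‖fplus lam ξ‖ ≤ M * mwt (ξ * lam)) :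
    ∀ ε : ℝ, 0 < ε → ∃ C > 0, ∃ lam0 > 0, ∀ lam : ℝ, 0 < lam → lam < lam0 →
      ∀ ξ : ℝ, (Real.log lam) ^ 2 ≤ ξ → ξ * lam ≤ 1 →
        ‖fplus lam ξ‖ ≤ C * mwt (ξ * lam) ∧
        ‖fplus lam ξ - f0 lam ξ‖ ≤ C * ξ ^ (-(1 : ℝ) / 2) * lam ^ ((1 : ℝ) / 2 - ε) := by
  intro ε hε
  set N : ℕ := Nat.ceil (4*C0^2) with hN
  set cN : ℝ := bootC C0 N with hcNdef
  have hcN : 0 ≤ cN := bootC_nonneg hC0.le N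
  refine ⟨cN + C0^2*cN*(27/ε^3) + 1, by positivity, Real.exp (-1), Real.exp_pos _, ?_⟩
  intro lam hlam hlamlt ξ hξL hξlam
  have hlam' : lam ≤ Real.exp (-1) := hlamlt.le
  have hlog : Real.log lam < -1 := by
    have h := Real.log_lt_log hlam hlamlt
    rwa [Real.log_exp] at h
  have hL1 : 1 ≤ (Real.log lam)^2 := by nlinarith
  have hL0 : (0:ℝ) < (Real.log lam)^2 := by linarith
  have hξ1 : 1 ≤ ξ := le_trans hL1 hξL
  have hξ0 : (0:ℝ) < ξ := by linarith
  obtain ⟨M, hM⟩ := hbd lam hlam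
  set M' := max M 1 with hM'def
  have hM'1 : (1:ℝ) ≤ M' := le_max_right _ _
  have hM'pos : (0:ℝ) < M' := by linarith
  have hMle : ∀ ζ : ℝ, 0 < ζ → ‖fplus lam ζ‖ ≤ M' * mwt (ζ * lam) := fun ζ hζ =>
    le_trans (hM ζ hζ) (mul_le_mul_of_nonneg_right (le_max_left _ _) (mwt_nonneg _))
  set A := 4*C0^2*(Real.log lam)^2 with hA
  have hA0 : (0:ℝ) < A := by positivity
  have hCL : (0:ℝ) ≤ C0^2 * (Real.log lam)^2 := by positivity
  have hCLA : C0^2 * (Real.log lam)^2 * A⁻¹ = 1/4 := by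
    rw [hA]; field_simp; ring
    exact mul_inv_cancel₀ (ne_of_lt (by linarith))
  have hinduct : ∀ j : ℕ, ∀ ζ : ℝ, max ((Real.log lam)^2) (A/(1+(j:ℝ))) ≤ ζ →
      ‖fplus lam ζ‖ ≤ bootC C0 j * mwt (ζ * lam) := by
    intro j; induction j with
    | zero =>
      have ha0A : A ≤ max ((Real.log lam)^2) (A/(1+((0:ℕ):ℝ))) := by
        have hdiv0 : A/(1+((0:ℕ):ℝ)) = A := by norm_num
        rw [hdiv0]; exact le_max_right _ _
      set a0 := max ((Real.log lam)^2) (A/(1+((0:ℕ):ℝ))) with ha0def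
      set b0 := max a0 (C0^2*(Real.log lam)^2*M') with hb0def
      have ha01 : 1 ≤ a0 := le_trans hL1 (le_max_left _ _)
      have ha00 : (0:ℝ) < a0 := by linarith
      have hb00 : (0:ℝ) < b0 := lt_of_lt_of_le ha00 (le_max_left _ _)
      have h := step_lemma C0 hC0 V1 f0 fplus G0 hV1 hf0 hG0 hint heq lam hlam hlam'
        M' hMle a0 b0 M' (M'⁻¹) ha01 (le_max_left _ _) hM'pos.le (by positivity)
        (by
          have h1 : a0⁻¹ ≤ A⁻¹ := inv_anti hA0 ha0A
          have h2 : (0:ℝ) ≤ b0⁻¹ := by positivity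
          calc C0^2 * (Real.log lam)^2 * (a0⁻¹ - b0⁻¹)
              ≤ C0^2 * (Real.log lam)^2 * A⁻¹ :=
                mul_le_mul_of_nonneg_left (by linarith) hCL
            _ = 1/4 := hCLA)
        (by
          have hCLM : (0:ℝ) < C0^2*(Real.log lam)^2*M' := by positivity
          have h1 : b0⁻¹ ≤ (C0^2*(Real.log lam)^2*M')⁻¹ :=
            inv_anti hCLM (le_max_right _ _)
          calc C0^2 * (Real.log lam)^2 * b0⁻¹
              ≤ C0^2 * (Real.log lam)^2 * (C0^2*(Real.log lam)^2*M')⁻¹ :=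
                mul_le_mul_of_nonneg_left h1 hCL
            _ = M'⁻¹ := by field_simp; exact div_self (ne_of_lt (by linarith)))
        (fun ζ hζ => hMle ζ (lt_of_lt_of_le (lt_of_lt_of_le ha00 (le_max_left _ _)) hζ))
      intro ζ hζ
      have h2 := h ζ hζ
      rw [inv_mul_cancel₀ hM'pos.ne'] at h2
      rwa [bootC_zero]
    | succ j ih =>
      have hj2 : (0:ℝ) < 1+((j:ℝ)+1) := by positivity
      have hj1 : (0:ℝ) < 1+(j:ℝ) := by positivity
      have hcast : ((j+1:ℕ):ℝ) = (j:ℝ)+1 := by push_cast; ring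
      set aS := max ((Real.log lam)^2) (A/(1+((j+1:ℕ):ℝ))) with haSdef
      set aJ := max ((Real.log lam)^2) (A/(1+(j:ℝ))) with haJdef
      have haS1 : 1 ≤ aS := le_trans hL1 (le_max_left _ _)
      have haJlb : A/(1+(j:ℝ)) ≤ aJ := le_max_right _ _
      have haSlb : A/(1+((j:ℝ)+1)) ≤ aS := by
        rw [haSdef, hcast]; exact le_max_right _ _
      have haSaJ : aS ≤ aJ := by
        apply max_le_max le_rfl
        rw [hcast]
        exact div_le_div_of_nonneg_left hA0.le hj1 (by linarith)
      have hinvJ : aJ⁻¹ ≤ (1+(j:ℝ))/A := by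
        have h := inv_anti (show (0:ℝ) < A/(1+(j:ℝ)) by positivity) haJlb
        rwa [inv_div] at h
      have hinvS : aS⁻¹ ≤ (1+((j:ℝ)+1))/A := by
        have h := inv_anti (show (0:ℝ) < A/(1+((j:ℝ)+1)) by positivity) haSlb
        rwa [inv_div] at h
      have hstepA : (1+((j:ℝ)+1))/A - (1+(j:ℝ))/A = A⁻¹ := by
        rw [div_sub_div_same, show (1+((j:ℝ)+1)) - (1+(j:ℝ)) = 1 from by ring, one_div]
      have h := step_lemma C0 hC0 V1 f0 fplus G0 hV1 hf0 hG0 hint heq lam hlam hlam'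
        M' hMle aS aJ (bootC C0 j) (((j:ℝ)+1)/4) haS1 haSaJ (bootC_nonneg hC0.le j)
        (by positivity)
        (by
          have hd : aS⁻¹ - aJ⁻¹ ≤ A⁻¹ := by
            rcases le_total (A/(1+(j:ℝ))) ((Real.log lam)^2) with hc | hc
            · have e : aJ = (Real.log lam)^2 := max_eq_left hc
              have e2 : (Real.log lam)^2 ≤ aS := le_max_left _ _
              have h3 : aS⁻¹ ≤ ((Real.log lam)^2)⁻¹ := inv_anti hL0 e2
              have h4 : (0:ℝ) ≤ A⁻¹ := by positivity
              rw [e]; linarith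
            · have e : aJ = A/(1+(j:ℝ)) := max_eq_right hc
              have e' : aJ⁻¹ = (1+(j:ℝ))/A := by rw [e, inv_div]
              rw [e']; linarith
          calc C0^2 * (Real.log lam)^2 * (aS⁻¹ - aJ⁻¹)
              ≤ C0^2 * (Real.log lam)^2 * A⁻¹ := mul_le_mul_of_nonneg_left hd hCL
            _ = 1/4 := hCLA)
        (by
          calc C0^2 * (Real.log lam)^2 * aJ⁻¹
              ≤ C0^2 * (Real.log lam)^2 * ((1+(j:ℝ))/A) :=
                mul_le_mul_of_nonneg_left hinvJ hCL
            _ = ((j:ℝ)+1)/4 := by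
              rw [hA]; field_simp; ring
              rw [mul_comm (Real.log lam) (j:ℝ), mul_assoc, mul_inv_cancel₀ (ne_of_lt (by linarith))]; ring)
        ih
      intro ζ hζ
      have h2 := h ζ hζ
      rwa [← bootC_succ] at h2
  have hfin : ∀ ζ : ℝ, (Real.log lam)^2 ≤ ζ → ‖fplus lam ζ‖ ≤ cN * mwt (ζ * lam) := by
    intro ζ hζ
    apply hinduct N
    have hNge : 4*C0^2 ≤ 1+(N:ℝ) := by
      have h := Nat.le_ceil (4*C0^2)
      rw [← hN] at h; linarith
    have hANle : A/(1+(N:ℝ)) ≤ (Real.log lam)^2 := by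
      rw [div_le_iff₀ (by positivity)]
      rw [hA]; nlinarith
    exact max_le hζ (le_trans hANle hζ)
  constructor
  · refine le_trans (hfin ξ hξL) (mul_le_mul_of_nonneg_right ?_ (mwt_nonneg _))
    have : (0:ℝ) ≤ C0^2*cN*(27/ε^3) := by positivity
    linarith
  · -- second bound
    have hdiff : fplus lam ξ - f0 lam ξ
        = ∫ η in Set.Ioi ξ, G0 lam ξ η * (V1 η : ℂ) * fplus lam η := by
      rw [heq lam hlam ξ hξ0]; ring
    rw [hdiff]
    have hpb := piece_bound C0 hC0 V1 fplus G0 hV1 hG0 lam hlam hlam' ξ hξ1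
      (Set.Ioi ξ) measurableSet_Ioi (subset_refl _) cN hcN
      (fun η hη => hfin η (le_trans hξL (le_of_lt hη)))
    have hIoi : (∫ η in Set.Ioi ξ, η ^ (-(2:ℝ))) = ξ⁻¹ := by
      rw [integral_Ioi_rpow_of_lt (by norm_num) hξ0,
        show (-(2:ℝ))+1 = -1 from by norm_num, Real.rpow_neg_one]
      ring
    rw [hIoi] at hpb
    set l := -Real.log lam with hl
    have hl1 : 1 ≤ l := by rw [hl]; linarith
    have hxlam0 : 0 < ξ * lam := mul_pos hξ0 hlam
    have hmle : mwt (ξ*lam) ≤ Real.sqrt (ξ*lam) * l := by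
      apply mwt_le_sqrt hxlam0 hξlam hl1
      have h1 : Real.log (ξ*lam) ≤ 0 := Real.log_nonpos hxlam0.le hξlam
      have h2 : Real.log lam ≤ Real.log (ξ*lam) := by
        apply Real.log_le_log hlam; nlinarith
      rw [abs_of_nonpos h1, hl]; linarith
    -- rpow algebra
    have hsqmul : Real.sqrt (ξ*lam) = Real.sqrt ξ * Real.sqrt lam := Real.sqrt_mul hξ0.le _
    have hsqξ : Real.sqrt ξ * ξ⁻¹ = ξ ^ (-(1:ℝ)/2) := by
      rw [Real.sqrt_eq_rpow, ← Real.rpow_neg_one ξ, ← Real.rpow_add hξ0]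
      norm_num
    have hsqlam : Real.sqrt lam = lam ^ ((1:ℝ)/2-ε) * lam ^ ε := by
      rw [← Real.rpow_add hlam, show (1:ℝ)/2-ε+ε = 1/2 from by ring, Real.sqrt_eq_rpow]
    have hl0 : (0:ℝ) ≤ l := by linarith
    have hcube : lam ^ ε * l^3 ≤ 27/ε^3 := by
      have h1 : l ≤ (3/ε) * lam ^ (-(ε/3)) := by
        have h2 := Real.log_le_rpow_div (inv_nonneg.2 hlam.le) (show (0:ℝ) < ε/3 by linarith)
        rw [Real.log_inv] at h2
        have h3 : (lam⁻¹) ^ (ε/3) = lam ^ (-(ε/3)) := by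
          rw [← Real.rpow_neg_one lam, ← Real.rpow_mul hlam.le]
          norm_num
        rw [h3] at h2
        rw [hl]
        calc -Real.log lam ≤ lam ^ (-(ε/3)) / (ε/3) := h2
          _ = (3/ε) * lam ^ (-(ε/3)) := by field_simp
      have h4 : l^3 ≤ ((3/ε) * lam ^ (-(ε/3)))^3 := pow_le_pow_left₀ hl0 h1 3
      have h5 : ((3/ε) * lam ^ (-(ε/3)))^3 = 27/ε^3 * lam ^ (-ε) := by
        rw [mul_pow]
        congr 1
        · rw [div_pow]; norm_num
        · rw [← Real.rpow_natCast (lam ^ (-(ε/3))) 3, ← Real.rpow_mul hlam.le]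
          congr 1
          push_cast; ring
      have h6 : lam ^ ε * l^3 ≤ lam ^ ε * (27/ε^3 * lam ^ (-ε)) := by
        apply mul_le_mul_of_nonneg_left _ (Real.rpow_nonneg hlam.le _)
        rw [← h5] at *; exact le_trans h4 (le_of_eq rfl)
      have h7 : lam ^ ε * (27/ε^3 * lam ^ (-ε)) = 27/ε^3 := by
        rw [show lam ^ ε * (27/ε^3 * lam ^ (-ε)) = 27/ε^3 * (lam ^ ε * lam ^ (-ε)) from by ring,
          ← Real.rpow_add hlam, show ε + -ε = 0 from by ring, Real.rpow_zero, mul_one]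
      calc lam ^ ε * l^3 ≤ lam ^ ε * (27/ε^3 * lam ^ (-ε)) := by
            rw [← h5]
            exact mul_le_mul_of_nonneg_left h4 (Real.rpow_nonneg hlam.le _)
        _ = 27/ε^3 := h7
    -- chain everything
    have hchain1 : (C0^2 * cN * mwt (ξ * lam) * (Real.log lam)^2) * ξ⁻¹
        ≤ (C0^2 * cN * (Real.sqrt (ξ*lam) * l) * (Real.log lam)^2) * ξ⁻¹ := by
      have hinv : (0:ℝ) ≤ ξ⁻¹ := by positivity
      have hstep : C0^2*cN*mwt (ξ*lam) ≤ C0^2*cN*(Real.sqrt (ξ*lam)*l) :=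
        mul_le_mul_of_nonneg_left hmle (by positivity)
      exact mul_le_mul_of_nonneg_right
        (mul_le_mul_of_nonneg_right hstep (sq_nonneg (Real.log lam))) hinv
    have hsqlog : (Real.log lam)^2 = l^2 := by rw [hl]; ring
    have hchain2 : (C0^2 * cN * (Real.sqrt (ξ*lam) * l) * (Real.log lam)^2) * ξ⁻¹
        = (C0^2 * cN * (lam ^ ε * l^3)) * (ξ ^ (-(1:ℝ)/2) * lam ^ ((1:ℝ)/2-ε)) := by
      rw [hsqlog, hsqmul, hsqlam, ← hsqξ]; ring
    have hfinal : (C0^2 * cN * (lam ^ ε * l^3)) * (ξ ^ (-(1:ℝ)/2) * lam ^ ((1:ℝ)/2-ε))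
        ≤ ((cN + C0^2*cN*(27/ε^3) + 1) * ξ ^ (-(1:ℝ)/2)) * lam ^ ((1:ℝ)/2-ε) := by
      have hxp : (0:ℝ) ≤ ξ ^ (-(1:ℝ)/2) := Real.rpow_nonneg hξ0.le _
      have hlp : (0:ℝ) ≤ lam ^ ((1:ℝ)/2-ε) := Real.rpow_nonneg hlam.le _
      have hcc : C0^2 * cN * (lam ^ ε * l^3) ≤ cN + C0^2*cN*(27/ε^3) + 1 := by
        have h8 : C0^2 * cN * (lam ^ ε * l^3) ≤ C0^2 * cN * (27/ε^3) := by
          apply mul_le_mul_of_nonneg_left hcube (by positivity)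
        have h9 : C0^2*cN*(27/ε^3) = C0^2 * cN * (27/ε^3) := by ring
        linarith
      calc (C0^2 * cN * (lam ^ ε * l^3)) * (ξ ^ (-(1:ℝ)/2) * lam ^ ((1:ℝ)/2-ε))
          ≤ ((cN + C0^2*cN*(27/ε^3) + 1)) * (ξ ^ (-(1:ℝ)/2) * lam ^ ((1:ℝ)/2-ε)) :=
            mul_le_mul_of_nonneg_right hcc (mul_nonneg hxp hlp)
        _ = ((cN + C0^2*cN*(27/ε^3) + 1) * ξ ^ (-(1:ℝ)/2)) * lam ^ ((1:ℝ)/2-ε) := by ring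
    calc ‖∫ η in Set.Ioi ξ, G0 lam ξ η * (V1 η : ℂ) * fplus lam η‖
        ≤ (C0^2 * cN * mwt (ξ * lam) * (Real.log lam)^2) * ξ⁻¹ := hpb
      _ ≤ (C0^2 * cN * (Real.sqrt (ξ*lam) * l) * (Real.log lam)^2) * ξ⁻¹ := hchain1
      _ = (C0^2 * cN * (lam ^ ε * l^3)) * (ξ ^ (-(1:ℝ)/2) * lam ^ ((1:ℝ)/2-ε)) := hchain2
      _ ≤ ((cN + C0^2*cN*(27/ε^3) + 1) * ξ ^ (-(1:ℝ)/2)) * lam ^ ((1:ℝ)/2-ε) := hfinal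
end
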